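/- Let (Σ, τ) be a subshift with complexity function ρ satisfying ((log n)/n)² ρ(n) → 0, and let S be a finite symmetric subset of [[τ]]. Fix L ≥ 1 and let A_n be the set of g in the group generated by S of word length at most n such that k_g is constant on every cylinder of depth ⌈√(L n log n)⌉. Then |A_n| ≤ (2Kn+1)^{ρ(2⌈√(L n log n)⌉+1)}, where K = max_{s∈S} max_x |k_s(x)|; consequently (1/n) log |A_n| → 0. -/

import Mathlib

open Filter

/-- The shift on bi-infinite sequences, as a bijection. -/
def shiftE {A : Type*} : (ℤ → A) ≃ (ℤ → A) where
  toFun x i := x (i + 1)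
  invFun x i := x (i - 1)
  left_inv x := by funext i; simp
  right_inv x := by funext i; simp

/-- The cylinder of depth `l` determined by the word `w`, inside the subshift `Sub`. -/
def cylinder {A : Type*} (Sub : Set (ℤ → A)) (w : ℤ → A) (l : ℕ) : Set (ℤ → A) :=
  {x ∈ Sub | ∀ i : ℤ, |i| ≤ (l : ℤ) → x i = w i}

/-- The complexity function of a subshift: the number of words of length `m` appearing as
subwords of elements of `Sub`. -/
noncomputable def complexity {A : Type*} (Sub : Set (ℤ → A)) (m : ℕ) : ℕ :=
  Nat.card {w : Fin m → A // ∃ x ∈ Sub, ∃ t : ℤ, ∀ i : Fin m, x (t + i) = w i}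

/-- The depth `⌈√(L n log n)⌉` used for the cylinders defining `A_n`. -/
noncomputable def cylDepth (L : ℝ) (n : ℕ) : ℕ := ⌈Real.sqrt (L * n * Real.log n)⌉₊

/-- The set `A_n`: elements of word length at most `n` (w.r.t. `S`) whose cocycle is
constant on every cylinder of depth `⌈√(L n log n)⌉`. -/
def goodSet {A : Type*} (Sub : Set (ℤ → A)) (S : Finset (Equiv.Perm ↥Sub))
    (k : Equiv.Perm ↥Sub → ↥Sub → ℤ) (L : ℝ) (n : ℕ) : Set (Equiv.Perm ↥Sub) :=
  {g | (∃ l : List (Equiv.Perm ↥Sub), (∀ s ∈ l, s ∈ S) ∧ l.length ≤ n ∧ l.prod = g) ∧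
    ∀ w : ℤ → A, ∀ x y : ↥Sub, (x : ℤ → A) ∈ cylinder Sub w (cylDepth L n) →
      (y : ℤ → A) ∈ cylinder Sub w (cylDepth L n) → k g x = k g y}

set_option linter.unusedSectionVars false

theorem shiftE_zpow_apply {A : Type*} (s : ℤ) (x : ℤ → A) (i : ℤ) :
    (shiftE ^ s) x i = x (i + s) := by
  induction s using Int.induction_on generalizing i with
  | zero => simp
  | succ n ih =>
      have h : (shiftE ^ ((n:ℤ)+1)) x = shiftE ((shiftE ^ (n:ℤ)) x) := by
        rw [add_comm, zpow_add, zpow_one, Equiv.Perm.mul_apply]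
      rw [h]
      show ((shiftE ^ (n:ℤ)) x) (i + 1) = _
      rw [ih]; ring_nf
  | pred n ih =>
      have h : (shiftE ^ (-(n:ℤ)-1)) x = shiftE.symm ((shiftE ^ (-(n:ℤ))) x) := by
        rw [sub_eq_add_neg, add_comm, zpow_add, zpow_neg_one, Equiv.Perm.mul_apply]
        rfl
      rw [h]
      show ((shiftE ^ (-(n:ℤ))) x) (i - 1) = _
      rw [ih]; ring_nf


theorem per_mul {A : Type*} {f : ℤ → A} {p : ℤ} (hf : ∀ i, f (i + p) = f i) :
    ∀ (t i : ℤ), f (i + p * t) = f i := by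
  intro t
  induction t using Int.induction_on with
  | zero => simp
  | succ n ih =>
      intro i
      have : i + p * ((n:ℤ)+1) = (i + p * n) + p := by ring
      rw [this, hf, ih]
  | pred n ih =>
      intro i
      have h2 : ∀ j, f (j - p) = f j := by
        intro j; have := hf (j - p); simpa using this.symm
      have : i + p * (-(n:ℤ)-1) = (i + p * (-(n:ℤ))) - p := by ring
      rw [this, h2, ih]

/-- Two p-periodic functions agreeing on `[a, a+p)` are equal. -/
theorem per_ext {A : Type*} {f g : ℤ → A} {p : ℤ} (a : ℤ) (hp : 0 < p)
    (hf : ∀ i, f (i + p) = f i) (hg : ∀ i, g (i + p) = g i)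
    (h : ∀ i, a ≤ i → i < a + p → f i = g i) : f = g := by
  funext i
  set r := a + (i - a) % p with hr
  have h0 : 0 ≤ (i - a) % p := Int.emod_nonneg _ hp.ne'
  have h1 : (i - a) % p < p := Int.emod_lt_of_pos _ hp
  have hdiv : i = r + p * ((i - a) / p) := by
    rw [hr]
    have := Int.emod_add_mul_ediv (i - a) p
    linarith [this]
  calc f i = f r := by rw [hdiv, per_mul hf]
    _ = g r := h r (by omega) (by omega)
    _ = g i := by rw [hdiv, per_mul hg]

/-- A p-periodic and a q-periodic function agreeing on a long window are equal. -/
theorem per_agree {A : Type*} {x y : ℤ → A} {p q N : ℤ} (hp : 0 < p) (hq : 0 < q)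
    (hN : p + q ≤ N)
    (hx : ∀ i, x (i + p) = x i) (hy : ∀ i, y (i + q) = y i)
    (h : ∀ i : ℤ, |i| ≤ N → x i = y i) : x = y := by
  -- first: x is q-periodic
  have hxq : ∀ i, x (i + q) = x i := by
    have key : (fun i => x (i + q)) = x := by
      apply per_ext (-N) hp
        (fun i => by show x (i+p+q) = x (i+q); rw [show i+p+q = i+q+p by ring, hx]) hx
      intro i hi1 hi2
      show x (i + q) = x i
      have e1 : x (i + q) = y (i + q) := h _ (by rw [abs_le]; omega)
      have e2 : y (i + q) = y i := hy i
      have e3 : y i = x i := (h i (by rw [abs_le]; omega)).symm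
      rw [e1, e2, e3]
    intro i; exact congrFun key i
  -- now y = x on all of ℤ by reducing mod q into the window
  apply funext; intro i
  set r := -N + (i + N) % q with hr
  have h0 : 0 ≤ (i + N) % q := Int.emod_nonneg _ hq.ne'
  have h1 : (i + N) % q < q := Int.emod_lt_of_pos _ hq
  have hdiv : i = r + q * ((i + N) / q) := by
    rw [hr]
    have := Int.emod_add_mul_ediv (i + N) q
    linarith [this]
  calc x i = x r := by rw [hdiv, per_mul hxq]
    _ = y r := h r (by rw [abs_le]; omega)
    _ = y i := by rw [hdiv, per_mul hy]

section Aux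
variable {A : Type*} [Fintype A] [TopologicalSpace A] [DiscreteTopology A]
  {Sub : Set (ℤ → A)}

theorem cont_shift (u : ↥Sub → ℤ) (hu : Continuous u) :
    Continuous (fun x : ↥Sub => (shiftE ^ (u x)) (x : ℤ → A)) := by
  rw [continuous_iff_continuousAt]
  intro x
  have hev : ∀ᶠ y in nhds x, u y = u x := by
    have : IsOpen (u ⁻¹' {u x}) := (isOpen_discrete _).preimage hu
    exact this.mem_nhds (by simp)
  have hc : ContinuousAt (fun y : ↥Sub => (shiftE ^ (u x)) (y : ℤ → A)) x := by
    have : (fun y : ↥Sub => (shiftE ^ (u x)) (y : ℤ → A))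
        = fun y : ↥Sub => (fun i => (y : ℤ → A) (i + u x)) := by
      funext y; funext i; exact shiftE_zpow_apply _ _ _
    rw [this]
    exact (continuous_pi fun i => (continuous_apply (i + u x)).comp
      continuous_subtype_val).continuousAt
  apply hc.congr
  filter_upwards [hev] with y hy
  rw [hy]

theorem cont_perm (g : Equiv.Perm ↥Sub) (k : Equiv.Perm ↥Sub → ↥Sub → ℤ)
    (hkg : ∀ x : ↥Sub, ((g x : ↥Sub) : ℤ → A) = (shiftE ^ k g x) (x : ℤ → A))
    (hkgc : Continuous (k g)) : Continuous (fun x : ↥Sub => g x) := by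
  have h : (fun x : ↥Sub => g x)
      = fun x : ↥Sub => (⟨(shiftE ^ k g x) (x : ℤ → A), by rw [← hkg x]; exact (g x).2⟩ : ↥Sub) := by
    funext x; exact Subtype.ext (hkg x)
  rw [h]
  exact Continuous.subtype_mk (cont_shift (k g) hkgc) _

variable (S : Finset (Equiv.Perm ↥Sub)) (k : Equiv.Perm ↥Sub → ↥Sub → ℤ)
    (hk : ∀ g ∈ Subgroup.closure (S : Set (Equiv.Perm ↥Sub)), ∀ x : ↥Sub,
      ((g x : ↥Sub) : ℤ → A) = (shiftE ^ k g x) (x : ℤ → A))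
    (hkcont : ∀ g ∈ Subgroup.closure (S : Set (Equiv.Perm ↥Sub)), Continuous (k g))
    (K : ℕ) (hK : ∀ s ∈ S, ∀ x : ↥Sub, |k s x| ≤ (K : ℤ))

include hk hkcont hK in
theorem exists_m (l : List (Equiv.Perm ↥Sub)) (hl : ∀ s ∈ l, s ∈ S) :
    ∃ m : ↥Sub → ℤ, Continuous m ∧ (∀ x, |m x| ≤ (K : ℤ) * l.length) ∧
      (∀ x : ↥Sub, ((l.prod x : ↥Sub) : ℤ → A) = (shiftE ^ (m x)) (x : ℤ → A)) ∧
      Continuous (fun x : ↥Sub => l.prod x) := by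
  induction l with
  | nil =>
      refine ⟨fun _ => 0, continuous_const, by simp, fun x => by simp, ?_⟩
      simpa using continuous_id'
  | cons s t ih =>
      obtain ⟨m', hm'c, hm'b, hm'e, hm'p⟩ := ih (fun a ha => hl a (List.mem_cons_of_mem _ ha))
      have hsS : s ∈ S := hl s List.mem_cons_self
      have hscl : s ∈ Subgroup.closure (S : Set (Equiv.Perm ↥Sub)) :=
        Subgroup.subset_closure hsS
      have hscont : Continuous (fun x : ↥Sub => s x) :=
        cont_perm s k (hk s hscl) (hkcont s hscl)
      refine ⟨fun x => k s (t.prod x) + m' x, ?_, ?_, ?_, ?_⟩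
      · exact ((hkcont s hscl).comp hm'p).add hm'c
      · intro x
        have h1 := hK s hsS (t.prod x)
        have h2 := hm'b x
        have hlen : ((s :: t).length : ℤ) = t.length + 1 := by push_cast [List.length_cons]; ring
        calc |k s (t.prod x) + m' x| ≤ |k s (t.prod x)| + |m' x| := abs_add_le _ _
          _ ≤ K + K * t.length := add_le_add h1 h2
          _ = K * (s :: t).length := by rw [hlen]; ring
      · intro x
        have e1 : ((s :: t).prod) x = s (t.prod x) := by
          rw [List.prod_cons, Equiv.Perm.mul_apply]
        rw [e1, hk s hscl (t.prod x), hm'e x]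
        have : (shiftE ^ k s (t.prod x)) ((shiftE ^ m' x) (x : ℤ → A))
            = (shiftE ^ (k s (t.prod x) + m' x)) (x : ℤ → A) := by
          rw [zpow_add, Equiv.Perm.mul_apply]
        rw [this]
      · have e1 : (fun x : ↥Sub => ((s :: t).prod) x)
            = fun x : ↥Sub => s (t.prod x) := by
          funext x; rw [List.prod_cons, Equiv.Perm.mul_apply]
        rw [e1]
        exact hscont.comp hm'p

include hk hkcont hK in
theorem cocycle_bound
    (hiso : ∀ x ∈ Sub, (∃ n : ℤ, n ≠ 0 ∧ (shiftE ^ n) x = x) → x ∈ closure (Sub \ {x}))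
    (l : List (Equiv.Perm ↥Sub)) (hl : ∀ s ∈ l, s ∈ S) (x : ↥Sub) :
    |k l.prod x| ≤ (K : ℤ) * l.length := by
  by_contra hcon
  push_neg at hcon
  obtain ⟨m, hmc, hmb, hme, hmp⟩ := exists_m S k hk hkcont K hK l hl
  set g := l.prod with hgdef
  have hg : g ∈ Subgroup.closure (S : Set (Equiv.Perm ↥Sub)) :=
    Subgroup.list_prod_mem _ (fun a ha => Subgroup.subset_closure (hl a ha))
  -- every point z is (k g z - m z)-periodic
  have hper : ∀ (z : ↥Sub) (i : ℤ),
      (z : ℤ → A) (i + (k g z - m z)) = (z : ℤ → A) i := by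
    intro z i
    have h3 : (z : ℤ → A) (i - m z + k g z) = (z : ℤ → A) (i - m z + m z) := by
      have := congrFun ((hk g hg z).symm.trans (hme z)) (i - m z)
      rwa [shiftE_zpow_apply, shiftE_zpow_apply] at this
    have e : i + (k g z - m z) = i - m z + k g z := by ring
    rw [e, h3]
    ring_nf
  set p := k g x - m x with hpdef
  have hp0 : p ≠ 0 := by
    intro h
    have : k g x = m x := by omega
    rw [this] at hcon
    exact absurd (hmb x) (not_le.2 hcon)
  have hxper : (shiftE ^ p) (x : ℤ → A) = (x : ℤ → A) := by
    funext i; rw [shiftE_zpow_apply]; exact hper x i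
  have hcl : (x : ℤ → A) ∈ closure (Sub \ {(x : ℤ → A)}) :=
    hiso x.1 x.2 ⟨p, hp0, hxper⟩
  set M : ℤ := |k g x| + K * l.length with hMdef
  set N : ℤ := 2 * M with hNdef
  -- open set where k g is constant
  have hU : IsOpen ((k g) ⁻¹' {k g x}) := (isOpen_discrete _).preimage (hkcont g hg)
  rw [isOpen_induced_iff] at hU
  obtain ⟨V, hVopen, hVU⟩ := hU
  -- window set
  set W : Set (ℤ → A) := {z | ∀ i : ℤ, |i| ≤ N → z i = (x : ℤ → A) i} with hWdef
  have hWopen : IsOpen W := by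
    have : W = ⋂ i ∈ Finset.Icc (-N) N, {z : ℤ → A | z i = (x : ℤ → A) i} := by
      ext z
      simp only [hWdef, Set.mem_setOf_eq, Set.mem_iInter, Finset.mem_Icc]
      constructor
      · intro h i hi; exact h i (abs_le.2 ⟨hi.1, hi.2⟩)
      · intro h i hi; exact h i ⟨(abs_le.1 hi).1, (abs_le.1 hi).2⟩
    rw [this]
    refine isOpen_biInter_finset fun i _ => ?_
    have : {z : ℤ → A | z i = (x : ℤ → A) i}
        = (fun z : ℤ → A => z i) ⁻¹' {(x : ℤ → A) i} := rfl
    rw [this]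
    exact (isOpen_discrete _).preimage (continuous_apply i)
  have hxV : (x : ℤ → A) ∈ V := by
    have : x ∈ Subtype.val ⁻¹' V := by rw [hVU]; simp
    exact this
  have hxW : (x : ℤ → A) ∈ W := fun i _ => rfl
  obtain ⟨y, hyVW, hySub, hyne⟩ :=
    mem_closure_iff.1 hcl (V ∩ W) (hVopen.inter hWopen) ⟨hxV, hxW⟩
  set yy : ↥Sub := ⟨y, hySub⟩ with hyydef
  have hky : k g yy = k g x := by
    have : yy ∈ Subtype.val ⁻¹' V := hyVW.1
    rw [hVU] at this
    exact this
  set q := k g yy - m yy with hqdef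
  have hq0 : q ≠ 0 := by
    intro h
    have : k g x = m yy := by omega
    rw [this] at hcon
    exact absurd (hmb yy) (not_le.2 hcon)
  have hyper : ∀ i, y (i + q) = y i := hper yy
  have hxper' : ∀ i, (x : ℤ → A) (i + p) = (x : ℤ → A) i := hper x
  -- convert periods to positive ones
  have per_abs : ∀ (f : ℤ → A) (c : ℤ), (∀ i, f (i + c) = f i) → (∀ i, f (i + |c|) = f i) := by
    intro f c hc i
    rcases abs_cases c with ⟨h, _⟩ | ⟨h, _⟩
    · rw [h]; exact hc i
    · rw [h]
      have := hc (i + -c)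
      rw [show i + -c + c = i by ring] at this
      exact this.symm
  have hpM : |p| ≤ M := by
    rw [hpdef, hMdef]
    calc |k g x - m x| ≤ |k g x| + |m x| := abs_sub _ _
      _ ≤ |k g x| + K * l.length := by linarith [hmb x]
  have hqM : |q| ≤ M := by
    rw [hqdef, hMdef, hky]
    calc |k g x - m yy| ≤ |k g x| + |m yy| := abs_sub _ _
      _ ≤ |k g x| + K * l.length := by linarith [hmb yy]
  have heq : (x : ℤ → A) = y := by
    apply per_agree (p := |p|) (q := |q|) (N := N) (abs_pos.2 hp0) (abs_pos.2 hq0)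
      (by omega) (per_abs _ _ hxper') (per_abs _ _ hyper)
    intro i hi
    exact (hyVW.2 i hi).symm
  exact hyne (Set.mem_singleton_iff.2 heq.symm)

include hk hkcont hK in
theorem card_bound
    (hinv : shiftE '' Sub = Sub)
    (hiso : ∀ x ∈ Sub, (∃ n : ℤ, n ≠ 0 ∧ (shiftE ^ n) x = x) → x ∈ closure (Sub \ {x}))
    (L : ℝ) (n : ℕ) :
    Nat.card (goodSet Sub S k L n) ≤
      (2 * K * n + 1) ^ complexity Sub (2 * cylDepth L n + 1) := by
  classical
  set l : ℕ := cylDepth L n with hldef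
  set m : ℕ := 2 * l + 1 with hmdef
  -- shift invariance of Sub
  have hmem1 : ∀ z ∈ Sub, shiftE z ∈ Sub := by
    intro z hz
    rw [← hinv]; exact ⟨z, hz, rfl⟩
  have hmem2 : ∀ z ∈ Sub, shiftE.symm z ∈ Sub := by
    intro z hz
    rw [← hinv] at hz
    obtain ⟨w, hw, rfl⟩ := hz
    simpa using hw
  have shift_mem : ∀ (s : ℤ), ∀ z ∈ Sub, (shiftE ^ s) z ∈ Sub := by
    intro s
    induction s using Int.induction_on with
    | zero => intro z hz; simpa using hz
    | succ j ih =>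
        intro z hz
        have h : (shiftE ^ ((j:ℤ)+1)) z = shiftE ((shiftE ^ (j:ℤ)) z) := by
          rw [add_comm, zpow_add, zpow_one, Equiv.Perm.mul_apply]
        rw [h]; exact hmem1 _ (ih z hz)
    | pred j ih =>
        intro z hz
        have h : (shiftE ^ (-(j:ℤ)-1)) z = shiftE.symm ((shiftE ^ (-(j:ℤ))) z) := by
          rw [sub_eq_add_neg, add_comm, zpow_add, zpow_neg_one, Equiv.Perm.mul_apply]
          rfl
        rw [h]; exact hmem2 _ (ih z hz)
  -- the type of words of length m appearing in Sub
  set WordT := {w : Fin m → A // ∃ x ∈ Sub, ∃ t : ℤ, ∀ i : Fin m, x (t + i) = w i}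
    with hWT
  haveI : Finite WordT := Subtype.finite
  -- chosen point for each word
  have choose_pt : ∀ w : WordT, ∃ y : ↥Sub,
      ∀ i : ℤ, ∀ hi : |i| ≤ (l : ℤ), (y : ℤ → A) i
        = w.1 ⟨(i + l).toNat, by have h := abs_le.1 hi; omega⟩ := by
    intro w
    obtain ⟨x, hxS, t, ht⟩ := w.2
    refine ⟨⟨(shiftE ^ (t + l)) x, shift_mem _ x hxS⟩, ?_⟩
    intro i hi
    have h1 : ((shiftE ^ (t + (l:ℤ))) x) i = x (i + (t + l)) := shiftE_zpow_apply _ _ _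
    have hi1 : 0 ≤ i + (l:ℤ) := by
      have := (abs_le.1 hi).1; omega
    have hi2 : (i + (l:ℤ)).toNat < m := by
      have := (abs_le.1 hi).2; omega
    have h2 := ht ⟨(i + l).toNat, hi2⟩
    have h3 : t + ((⟨(i + (l:ℤ)).toNat, hi2⟩ : Fin m) : ℤ) = i + (t + l) := by
      simp only [Fin.val_mk]
      omega
    show ((shiftE ^ (t + (l:ℤ))) x) i = _
    rw [h1, ← h3, h2]
  choose pt hpt using choose_pt
  -- the injection
  set F : ↥(goodSet Sub S k L n) → (WordT → Fin (2 * K * n + 1)) :=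
    fun g w => ⟨min ((k g.1 (pt w) + K * n).toNat) (2 * K * n), by omega⟩ with hF
  have hbound : ∀ g : ↥(goodSet Sub S k L n), ∀ z : ↥Sub, |k g.1 z| ≤ (K : ℤ) * n := by
    intro g z
    obtain ⟨⟨lst, hlst, hlen, hprod⟩, hconst⟩ := g.2
    have hb := cocycle_bound S k hk hkcont K hK hiso lst hlst z
    rw [hprod] at hb
    refine hb.trans ?_
    have h1 : (lst.length : ℤ) ≤ n := by exact_mod_cast hlen
    have h2 : (0:ℤ) ≤ K := Int.ofNat_nonneg K
    nlinarith
  have hcl : ∀ g : ↥(goodSet Sub S k L n),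
      g.1 ∈ Subgroup.closure (S : Set (Equiv.Perm ↥Sub)) := by
    intro g
    obtain ⟨⟨lst, hlst, hlen, hprod⟩, hconst⟩ := g.2
    rw [← hprod]
    exact Subgroup.list_prod_mem _ (fun a ha => Subgroup.subset_closure (hlst a ha))
  have hkey : ∀ g : ↥(goodSet Sub S k L n), ∀ z : ↥Sub,
      k g.1 z = k g.1 (pt ⟨fun i : Fin m => (z : ℤ → A) (-(l:ℤ) + i),
        ⟨z.1, z.2, -(l:ℤ), fun i => rfl⟩⟩) := by
    intro g z
    set w : WordT := ⟨fun i : Fin m => (z : ℤ → A) (-(l:ℤ) + i),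
      ⟨z.1, z.2, -(l:ℤ), fun i => rfl⟩⟩ with hwdef
    have hz : (z : ℤ → A) ∈ cylinder Sub (z : ℤ → A) (cylDepth L n) :=
      ⟨z.2, fun i _ => rfl⟩
    have hptz : ((pt w : ↥Sub) : ℤ → A) ∈ cylinder Sub (z : ℤ → A) (cylDepth L n) := by
      refine ⟨(pt w).2, ?_⟩
      intro i hi
      rw [hpt w i hi]
      show (z : ℤ → A) (-(l:ℤ) + ((i + (l:ℤ)).toNat : ℤ)) = (z : ℤ → A) i
      have h := abs_le.1 hi
      have h2 : ((i + (l:ℤ)).toNat : ℤ) = i + l := Int.toNat_of_nonneg (by omega)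
      rw [h2, show -(l:ℤ) + (i + l) = i by ring]
    exact g.2.2 (z : ℤ → A) z (pt w) hz hptz
  have hinj : Function.Injective F := by
    intro g g' hgg
    have hptval : ∀ w : WordT, k g.1 (pt w) = k g'.1 (pt w) := by
      intro w
      have he : min ((k g.1 (pt w) + K * n).toNat) (2 * K * n)
          = min ((k g'.1 (pt w) + K * n).toNat) (2 * K * n) :=
        congrArg Fin.val (congrFun hgg w)
      have h1 : -((K:ℤ) * n) ≤ k g.1 (pt w) ∧ k g.1 (pt w) ≤ (K:ℤ) * n :=
        abs_le.1 (hbound g (pt w))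
      have h2 : -((K:ℤ) * n) ≤ k g'.1 (pt w) ∧ k g'.1 (pt w) ≤ (K:ℤ) * n :=
        abs_le.1 (hbound g' (pt w))
      have hcast : ((2 * K * n : ℕ) : ℤ) = 2 * ((K:ℤ) * n) := by push_cast; ring
      have e1 : (k g.1 (pt w) + (K:ℤ) * n).toNat ≤ 2 * K * n := by omega
      have e2 : (k g'.1 (pt w) + (K:ℤ) * n).toNat ≤ 2 * K * n := by omega
      rw [min_eq_left e1, min_eq_left e2] at he
      omega
    have hval : ∀ z : ↥Sub, k g.1 z = k g'.1 z := by
      intro z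
      rw [hkey g z, hkey g' z, hptval]
    apply Subtype.ext
    apply Equiv.ext
    intro z
    apply Subtype.ext
    rw [hk g.1 (hcl g) z, hk g'.1 (hcl g') z, hval z]
  have hcard2 : Nat.card (WordT → Fin (2 * K * n + 1))
      = (2 * K * n + 1) ^ complexity Sub (2 * cylDepth L n + 1) := by
    rw [Nat.card_fun]
    congr 1
    exact Nat.card_eq_fintype_card.trans (Fintype.card_fin _)
  exact le_trans (Nat.card_le_card_of_injective F hinj) (le_of_eq hcard2)
end Aux


theorem analysis_lemma (ρ : ℕ → ℕ)
    (hρ : Tendsto (fun m : ℕ => (Real.log m / m) ^ 2 * ρ m) atTop (nhds 0))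
    (K : ℕ) (L : ℝ) (hL : 1 ≤ L) (cardf : ℕ → ℕ)
    (hcard : ∀ n, cardf n ≤ (2 * K * n + 1) ^ ρ (2 * cylDepth L n + 1)) :
    Tendsto (fun n : ℕ => Real.log (cardf n) / n) atTop (nhds 0) := by
  set m : ℕ → ℕ := fun n => 2 * cylDepth L n + 1 with hmdef
  -- basic facts for n ≥ 3
  have base : ∀ n : ℕ, 3 ≤ n →
      1 ≤ Real.log n ∧ Real.sqrt n ≤ (m n : ℝ) ∧
      ((m n : ℝ)) ^ 2 ≤ 25 * (L * n * Real.log n) ∧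
      Real.log n / 2 ≤ Real.log (m n) := by
    intro n hn
    have hn3 : (3 : ℝ) ≤ (n : ℝ) := by exact_mod_cast hn
    have hnpos : (0 : ℝ) < n := by linarith
    have hlog1 : 1 ≤ Real.log n := by
      rw [Real.le_log_iff_exp_le hnpos]
      calc Real.exp 1 ≤ 2.7182818286 := Real.exp_one_lt_d9.le
        _ ≤ n := by linarith
    have hlognn : (0:ℝ) ≤ L * n * Real.log n := by positivity
    have harg : (n : ℝ) ≤ L * n * Real.log n := by
      have t1 : (n:ℝ) ≤ (n:ℝ) * Real.log n := le_mul_of_one_le_right hnpos.le hlog1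
      have t2 : (n:ℝ) * Real.log n ≤ L * ((n:ℝ) * Real.log n) :=
        le_mul_of_one_le_left (by positivity) hL
      calc (n:ℝ) ≤ (n:ℝ) * Real.log n := t1
        _ ≤ L * ((n:ℝ) * Real.log n) := t2
        _ = L * n * Real.log n := by ring
    have hsq : Real.sqrt n ≤ Real.sqrt (L * n * Real.log n) := Real.sqrt_le_sqrt harg
    have hx1 : (1:ℝ) ≤ Real.sqrt (L * n * Real.log n) := by
      rw [show (1:ℝ) = Real.sqrt 1 by simp]
      exact Real.sqrt_le_sqrt (by nlinarith)
    have hcyl : Real.sqrt (L * n * Real.log n) ≤ (cylDepth L n : ℝ) := Nat.le_ceil _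
    have hmval : (m n : ℝ) = 2 * (cylDepth L n : ℝ) + 1 := by
      rw [hmdef]; push_cast; ring
    have hr1 : Real.sqrt n ≤ (m n : ℝ) := by
      rw [hmval]
      have h0 : (0:ℝ) ≤ (cylDepth L n : ℝ) := Nat.cast_nonneg _
      linarith [hsq.trans hcyl]
    have hceil : (cylDepth L n : ℝ) < Real.sqrt (L * n * Real.log n) + 1 :=
      Nat.ceil_lt_add_one (Real.sqrt_nonneg _)
    have hr2 : (m n : ℝ) ≤ 5 * Real.sqrt (L * n * Real.log n) := by
      rw [hmval]; linarith
    have hm2 : ((m n : ℝ)) ^ 2 ≤ 25 * (L * n * Real.log n) := by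
      have h5 : (0:ℝ) ≤ 5 * Real.sqrt (L * n * Real.log n) := by positivity
      have hmn0 : (0:ℝ) ≤ (m n : ℝ) := Nat.cast_nonneg _
      have := Real.sq_sqrt hlognn
      nlinarith
    have hlogm : Real.log n / 2 ≤ Real.log (m n) := by
      have hsqpos : (0:ℝ) < Real.sqrt n := Real.sqrt_pos.2 hnpos
      calc Real.log n / 2 = Real.log (Real.sqrt n) := (Real.log_sqrt hnpos.le).symm
        _ ≤ Real.log (m n) := Real.log_le_log hsqpos hr1
    exact ⟨hlog1, hr1, hm2, hlogm⟩
  -- m n → ∞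
  have hm_atTop : Tendsto m atTop atTop := by
    rw [tendsto_atTop_atTop]
    intro b
    refine ⟨max 3 (b * b), fun n hn => ?_⟩
    have hn3 : 3 ≤ n := le_trans (le_max_left _ _) hn
    have hnb : b * b ≤ n := le_trans (le_max_right _ _) hn
    obtain ⟨_, hr1, _, _⟩ := base n hn3
    have hb : (b : ℝ) ≤ Real.sqrt n := by
      have h2 : ((b:ℝ))^2 ≤ (n:ℝ) := by
        calc ((b:ℝ))^2 = ((b * b : ℕ) : ℝ) := by push_cast; ring
          _ ≤ (n : ℝ) := by exact_mod_cast hnb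
      calc (b:ℝ) = Real.sqrt ((b:ℝ)^2) := (Real.sqrt_sq (Nat.cast_nonneg b)).symm
        _ ≤ Real.sqrt n := Real.sqrt_le_sqrt h2
    have : (b : ℝ) ≤ (m n : ℝ) := hb.trans hr1
    exact_mod_cast this
  set D : ℝ := 100 * L * (Real.log (2 * K + 1) + 1) with hDdef
  have hC0 : 0 ≤ Real.log (2 * (K:ℝ) + 1) := by
    apply Real.log_nonneg; have : (0:ℝ) ≤ (K:ℝ) := Nat.cast_nonneg _; linarith
  -- eventual upper bound
  have hub : ∀ᶠ n in atTop, Real.log (cardf n) / n ≤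
      D * ((Real.log (m n) / m n) ^ 2 * ρ (m n)) := by
    filter_upwards [eventually_ge_atTop 3] with n hn3
    obtain ⟨hlog1, hr1, hm2, hlogm⟩ := base n hn3
    have hnpos : (0 : ℝ) < n := by
      have : (3:ℝ) ≤ (n:ℝ) := by exact_mod_cast hn3
      linarith
    have hmpos : (0:ℝ) < (m n : ℝ) := by
      have h1 : 0 < m n := by simp only [hmdef]; omega
      exact_mod_cast h1
    have hlmpos : (0:ℝ) < Real.log (m n) := by linarith
    have hrho0 : (0:ℝ) ≤ (ρ (m n) : ℝ) := Nat.cast_nonneg _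
    -- log(cardf n) ≤ ρ(m n) * log(2Kn+1)
    have hlcard : Real.log (cardf n) ≤ (ρ (m n) : ℝ) * Real.log (2 * K * n + 1) := by
      rcases Nat.eq_zero_or_pos (cardf n) with h0 | hpos
      · rw [h0]
        simp only [Nat.cast_zero, Real.log_zero]
        have : (0:ℝ) ≤ Real.log (2 * K * n + 1) := by
          apply Real.log_nonneg
          have : (0:ℝ) ≤ 2 * (K:ℝ) * n := by positivity
          linarith
        positivity
      · have hle : ((cardf n : ℕ) : ℝ) ≤ (((2 * K * n + 1) ^ ρ (m n) : ℕ) : ℝ) := by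
          exact_mod_cast hcard n
        have := Real.log_le_log (by exact_mod_cast hpos) hle
        rw [Nat.cast_pow, Real.log_pow] at this
        exact this.trans_eq (by push_cast; ring)
    -- key: log(2Kn+1) / n ≤ D * (log m / m)^2
    have hkey : Real.log (2 * (K:ℝ) * n + 1) / n ≤ D * (Real.log (m n) / (m n : ℝ)) ^ 2 := by
      have ht : Real.log (2 * (K:ℝ) * n + 1) ≤ Real.log (2 * K + 1) + Real.log n := by
        have h1 : (0:ℝ) < 2 * (K:ℝ) * n + 1 := by positivity
        have hn1 : (1:ℝ) ≤ (n:ℝ) := by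
          have h3 : (3:ℝ) ≤ (n:ℝ) := by exact_mod_cast hn3
          linarith
        have h2 : 2 * (K:ℝ) * n + 1 ≤ (2 * K + 1) * n := by
          nlinarith [Nat.cast_nonneg (α := ℝ) K]
        calc Real.log (2 * (K:ℝ) * n + 1) ≤ Real.log ((2 * K + 1) * n) := Real.log_le_log h1 h2
          _ = Real.log (2 * (K:ℝ) + 1) + Real.log n := by
              rw [Real.log_mul (by positivity) (by positivity)]
      have hLpos : (0:ℝ) < L := by linarith
      have hlogn : (0:ℝ) < Real.log n := by linarith
      -- (log m / m)^2 ≥ log n / (100 L n)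
      have hstep : Real.log n / (100 * L * n) ≤ (Real.log (m n) / (m n : ℝ)) ^ 2 := by
        rw [div_pow, div_le_div_iff₀ (by positivity) (by positivity)]
        have e1 : (Real.log n / 2) ^ 2 ≤ (Real.log (m n)) ^ 2 := by nlinarith
        nlinarith [sq_nonneg (Real.log (m n))]
      calc Real.log (2 * (K:ℝ) * n + 1) / n ≤ (Real.log (2 * K + 1) + Real.log n) / n := by
            exact div_le_div_of_nonneg_right ht hnpos.le
        _ ≤ (Real.log (2 * K + 1) + 1) * Real.log n / n := by
            apply div_le_div_of_nonneg_right ?_ hnpos.le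
            nlinarith
        _ = D * (Real.log n / (100 * L * n)) := by
            rw [hDdef]; field_simp
        _ ≤ D * (Real.log (m n) / (m n : ℝ)) ^ 2 := by
            apply mul_le_mul_of_nonneg_left hstep
            rw [hDdef]; positivity
    calc Real.log (cardf n) / n ≤ ((ρ (m n) : ℝ) * Real.log (2 * K * n + 1)) / n := by
          exact div_le_div_of_nonneg_right hlcard hnpos.le
      _ = (ρ (m n) : ℝ) * (Real.log (2 * (K:ℝ) * n + 1) / n) := by push_cast; ring
      _ ≤ (ρ (m n) : ℝ) * (D * (Real.log (m n) / (m n : ℝ)) ^ 2) :=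
          mul_le_mul_of_nonneg_left hkey hrho0
      _ = D * ((Real.log (m n) / m n) ^ 2 * ρ (m n)) := by ring
  have hlb : ∀ᶠ n in atTop, 0 ≤ Real.log (cardf n) / n := by
    filter_upwards [eventually_ge_atTop 1] with n hn
    have h1 : (0:ℝ) ≤ Real.log (cardf n) := Real.log_natCast_nonneg _
    have h2 : (0:ℝ) ≤ (n:ℝ) := Nat.cast_nonneg _
    positivity
  have htend : Tendsto (fun n => D * ((Real.log (m n) / m n) ^ 2 * ρ (m n))) atTop (nhds 0) := by
    have hcomp := hρ.comp hm_atTop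
    have := hcomp.const_mul D
    simpa using this
  exact squeeze_zero' hlb hub htend

/-- if the complexity ρ of the subshift satisfies ((log n)/n)² ρ(n) → 0, then
|A_n| ≤ (2Kn+1)^{ρ(2⌈√(L n log n)⌉+1)}, and consequently (1/n) log |A_n| → 0. -/
theorem goodSet_card_bound {A : Type*} [Fintype A]
    [TopologicalSpace A] [DiscreteTopology A]
    (Sub : Set (ℤ → A)) (hclosed : IsClosed Sub) (hinv : shiftE '' Sub = Sub)
    (hiso : ∀ x ∈ Sub, (∃ n : ℤ, n ≠ 0 ∧ (shiftE ^ n) x = x) → x ∈ closure (Sub \ {x}))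
    (hρ : Tendsto (fun m : ℕ => (Real.log m / m) ^ 2 * complexity Sub m) atTop (nhds 0))
    (S : Finset (Equiv.Perm ↥Sub)) (hSsymm : ∀ s ∈ S, s⁻¹ ∈ S)
    (k : Equiv.Perm ↥Sub → ↥Sub → ℤ)
    (hk : ∀ g ∈ Subgroup.closure (S : Set (Equiv.Perm ↥Sub)), ∀ x : ↥Sub,
      ((g x : ↥Sub) : ℤ → A) = (shiftE ^ k g x) (x : ℤ → A))
    (hkcont : ∀ g ∈ Subgroup.closure (S : Set (Equiv.Perm ↥Sub)), Continuous (k g))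
    (K : ℕ) (hK : ∀ s ∈ S, ∀ x : ↥Sub, |k s x| ≤ (K : ℤ))
    (L : ℝ) (hL : 1 ≤ L) :
    (∀ n : ℕ, Nat.card (goodSet Sub S k L n) ≤
        (2 * K * n + 1) ^ complexity Sub (2 * cylDepth L n + 1)) ∧
    Tendsto (fun n : ℕ => Real.log (Nat.card (goodSet Sub S k L n)) / n) atTop (nhds 0) := by
  have h1 : ∀ n : ℕ, Nat.card (goodSet Sub S k L n) ≤
      (2 * K * n + 1) ^ complexity Sub (2 * cylDepth L n + 1) :=
    fun n => card_bound S k hk hkcont K hK hinv hiso L n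
  exact ⟨h1, analysis_lemma (complexity Sub) hρ K L hL
    (fun n => Nat.card (goodSet Sub S k L n)) h1⟩
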